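/- If a differentiable function I : [0,∞) → ℝ satisfies I' = βSI + rRI - σI - μI with S(t) ≤ λ/μ and R(t) ≤ λ/μ for all t, and βλ/μ + rλ/μ < σ + μ, then I(t) ≤ I(0)·e^{-ct} for c = σ + μ - (β+r)λ/μ > 0; in particular I(t) → 0 as t → ∞ when I(0) ≥ 0. -/

import Mathlib

open Filter

/-- If S, R stay below λ/μ and (β+r)λ/μ < σ + μ, then I decays exponentially
with rate c = σ + μ - (β+r)λ/μ > 0, and I(t) → 0 when I(0) ≥ 0. -/
theorem stmt_19 (lam β μ r σ : ℝ)
    (hlam : 0 < lam) (hβ : 0 < β) (hμ : 0 < μ) (hr : 0 < r) (hσ : 0 < σ)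
    (I S R : ℝ → ℝ)
    (hId : ∀ t, 0 ≤ t → DifferentiableAt ℝ I t)
    (hInn : ∀ t, 0 ≤ t → 0 ≤ I t)
    (hSb : ∀ t, 0 ≤ t → S t ≤ lam / μ)
    (hRb : ∀ t, 0 ≤ t → R t ≤ lam / μ)
    (hI : ∀ t, 0 ≤ t →
      deriv I t = β * S t * I t + r * R t * I t - σ * I t - μ * I t)
    (hsmall : β * lam / μ + r * lam / μ < σ + μ)
    (c : ℝ) (hc : c = σ + μ - (β + r) * lam / μ) :
    0 < c ∧ (∀ t, 0 ≤ t → I t ≤ I 0 * Real.exp (-c * t)) ∧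
    (0 ≤ I 0 → Tendsto I atTop (nhds 0)) := by
  have hcpos : 0 < c := by
    rw [hc]
    have : (β + r) * lam / μ = β * lam / μ + r * lam / μ := by ring
    linarith [this ▸ hsmall]
  -- auxiliary function
  set g : ℝ → ℝ := fun t => I t * Real.exp (c * t) with hg
  have hgderiv : ∀ t, 0 ≤ t →
      HasDerivAt g ((deriv I t + c * I t) * Real.exp (c * t)) t := by
    intro t ht
    have h1 : HasDerivAt I (deriv I t) t := (hId t ht).hasDerivAt
    have h2 : HasDerivAt (fun t : ℝ => Real.exp (c * t)) (c * Real.exp (c * t)) t := by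
      have := ((hasDerivAt_id t).const_mul c).exp
      simpa [mul_comm] using this
    have : HasDerivAt (fun y => I y * Real.exp (c * y))
        (deriv I t * Real.exp (c * t) + I t * (c * Real.exp (c * t))) t := h1.mul h2
    convert this using 1
    ring
  -- derivative is nonpositive on [0,∞)
  have hderiv_nonpos : ∀ t, 0 ≤ t → deriv g t ≤ 0 := by
    intro t ht
    rw [(hgderiv t ht).deriv]
    have hIt := hInn t ht
    have hS : β * S t * I t ≤ β * (lam / μ) * I t := by
      apply mul_le_mul_of_nonneg_right _ hIt
      exact mul_le_mul_of_nonneg_left (hSb t ht) hβ.le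
    have hR : r * R t * I t ≤ r * (lam / μ) * I t := by
      apply mul_le_mul_of_nonneg_right _ hIt
      exact mul_le_mul_of_nonneg_left (hRb t ht) hr.le
    have key : deriv I t + c * I t ≤ 0 := by
      rw [hI t ht, hc]
      have : (σ + μ - (β + r) * lam / μ) * I t
          = σ * I t + μ * I t - (β * (lam / μ) * I t + r * (lam / μ) * I t) := by
        field_simp
      nlinarith [hS, hR]
    exact mul_nonpos_of_nonpos_of_nonneg key (Real.exp_pos _).le
  -- main bound
  have hbound : ∀ t, 0 ≤ t → I t ≤ I 0 * Real.exp (-c * t) := by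
    intro t ht
    have hanti : AntitoneOn g (Set.Icc 0 t) := by
      apply antitoneOn_of_deriv_nonpos (convex_Icc 0 t)
      · apply ContinuousOn.mul
        · exact fun x hx => ((hId x hx.1).continuousAt).continuousWithinAt
        · exact (Real.continuous_exp.comp (continuous_const.mul continuous_id)).continuousOn
      · intro x hx
        rw [interior_Icc] at hx
        exact ((hgderiv x hx.1.le).differentiableAt).differentiableWithinAt
      · intro x hx
        rw [interior_Icc] at hx
        exact hderiv_nonpos x hx.1.le
    have h0 : (0:ℝ) ∈ Set.Icc 0 t := ⟨le_refl 0, ht⟩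
    have ht' : t ∈ Set.Icc 0 t := ⟨ht, le_refl t⟩
    have := hanti h0 ht' ht
    simp only [hg, mul_zero, Real.exp_zero, mul_one] at this
    have hexp : (0:ℝ) < Real.exp (c * t) := Real.exp_pos _
    calc I t = I t * Real.exp (c * t) * Real.exp (-c * t) := by
            rw [mul_assoc, ← Real.exp_add]; simp
      _ ≤ I 0 * Real.exp (-c * t) :=
            mul_le_mul_of_nonneg_right this (Real.exp_pos _).le
  refine ⟨hcpos, hbound, fun hI0 => ?_⟩
  have hub : Tendsto (fun t => I 0 * Real.exp (-c * t)) atTop (nhds 0) := by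
    have : Tendsto (fun t : ℝ => -c * t) atTop atBot :=
      Tendsto.const_mul_atTop_of_neg (neg_neg_iff_pos.mpr hcpos) tendsto_id
    simpa using (Real.tendsto_exp_atBot.comp this).const_mul (I 0)
  apply tendsto_of_tendsto_of_tendsto_of_le_of_le' tendsto_const_nhds hub
  · filter_upwards [eventually_ge_atTop (0:ℝ)] with t ht using hInn t ht
  · filter_upwards [eventually_ge_atTop (0:ℝ)] with t ht using hbound t ht
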